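/- For every p with 0.3697 < p ≤ 1 there exist x, y, z > 0 such that p·x·y·z > N(p,x,y,z), where N(p,x,y,z) = ((2−√2)/4)p + ((1−p)/2)x²y² + ((2+√2 p)/4)x²y²z². Consequently, for such p the locally filtered state of ρ_χ(p) = p |Ψ⟩⟨Ψ| + (1−p)|00⟩⟨00|⊗(I₂/2), |Ψ⟩ = cos(π/8)|000⟩ + sin(π/8)|111⟩, obtained with filters F_A = diag(x,1), F_B = diag(y,1), F_C = diag(z,1), has correlation-matrix maximal singular value p x y z / N > 1, i.e. the Svetlichny bound 4 is exceeded. -/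

import Mathlib

open Matrix Polynomial
open scoped Kronecker ComplexOrder

/-- The Pauli matrices σ₁, σ₂, σ₃ (indexed by `Fin 3`). -/
noncomputable def pauli : Fin 3 → Matrix (Fin 2) (Fin 2) ℂ :=
  ![!![0, 1; 1, 0], !![0, -Complex.I; Complex.I, 0], !![1, 0; 0, -1]]

/-- The correlation matrix of a three-qubit state: `M_{j,(i,k)} = tr[ρ(σ_i⊗σ_j⊗σ_k)]`. -/
noncomputable def corrMat (ρ : Matrix (Fin 2 × Fin 2 × Fin 2) (Fin 2 × Fin 2 × Fin 2) ℂ) :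
    Matrix (Fin 3) (Fin 3 × Fin 3) ℝ :=
  fun j ik => ((ρ * (pauli ik.1 ⊗ₖ (pauli j ⊗ₖ pauli ik.2))).trace).re

/-- The observable `G = g₁σ₁ + g₂σ₂ + g₃σ₃` associated to a real vector `g ∈ ℝ³`. -/
noncomputable def obs (g : Fin 3 → ℝ) : Matrix (Fin 2) (Fin 2) ℂ :=
  ∑ i : Fin 3, ((g i : ℝ) : ℂ) • pauli i

/-- The Svetlichny operator built from the unit vectors `a, a', b, b', c, c' ∈ ℝ³`. -/
noncomputable def svetlichny (a a' b b' c c' : Fin 3 → ℝ) :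
    Matrix (Fin 2 × Fin 2 × Fin 2) (Fin 2 × Fin 2 × Fin 2) ℂ :=
  obs a ⊗ₖ ((obs b + obs b') ⊗ₖ obs c + (obs b - obs b') ⊗ₖ obs c')
    + obs a' ⊗ₖ ((obs b - obs b') ⊗ₖ obs c - (obs b + obs b') ⊗ₖ obs c')

/-- The vector `|Ψ⟩ = cos(π/8)|000⟩ + sin(π/8)|111⟩`. -/
noncomputable def psiChi : Fin 2 × Fin 2 × Fin 2 → ℂ :=
  fun x => if x = (0, 0, 0) then ((Real.cos (Real.pi / 8) : ℝ) : ℂ)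
    else if x = (1, 1, 1) then ((Real.sin (Real.pi / 8) : ℝ) : ℂ) else 0

/-- The rank-one projector `|0⟩⟨0|`. -/
noncomputable def E00 : Matrix (Fin 2) (Fin 2) ℂ := !![1, 0; 0, 0]

/-- The state `ρ_χ(p) = p|Ψ⟩⟨Ψ| + (1-p)|00⟩⟨00| ⊗ I₂/2`. -/
noncomputable def rhoChi (p : ℝ) :
    Matrix (Fin 2 × Fin 2 × Fin 2) (Fin 2 × Fin 2 × Fin 2) ℂ :=
  (p : ℂ) • Matrix.vecMulVec psiChi (star psiChi)
    + ((1 - p : ℝ) : ℂ) • (E00 ⊗ₖ (E00 ⊗ₖ (((2 : ℂ))⁻¹ • (1 : Matrix (Fin 2) (Fin 2) ℂ))))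

/-- The normalization factor `N(p,x,y,z)` of the filtered state of `ρ_χ(p)`. -/
noncomputable def Nchi (p x y z : ℝ) : ℝ :=
  (2 - Real.sqrt 2) / 4 * p + (1 - p) / 2 * (x ^ 2 * y ^ 2)
    + (2 + Real.sqrt 2 * p) / 4 * (x ^ 2 * y ^ 2 * z ^ 2)

/-- The filtered state of `ρ_χ(p)` with filters `diag(x,1), diag(y,1), diag(z,1)`. -/
noncomputable def rhoChiFiltered (p x y z : ℝ) :
    Matrix (Fin 2 × Fin 2 × Fin 2) (Fin 2 × Fin 2 × Fin 2) ℂ :=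
  ((Nchi p x y z : ℝ) : ℂ)⁻¹ •
    ((Matrix.diagonal ![(x : ℂ), 1] ⊗ₖ (Matrix.diagonal ![(y : ℂ), 1] ⊗ₖ
        Matrix.diagonal ![(z : ℂ), 1]))
      * rhoChi p *
      (Matrix.diagonal ![(x : ℂ), 1] ⊗ₖ (Matrix.diagonal ![(y : ℂ), 1] ⊗ₖ
        Matrix.diagonal ![(z : ℂ), 1]))ᴴ)


/-! ### Auxiliary definitions and lemmas -/

noncomputable def Vr (p x y z : ℝ) (i j k : Fin 3) : ℝ :=
  if i = 0 ∧ j = 0 ∧ k = 0 then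
    2*p*(x*y*z)*(Real.cos (Real.pi/8)*Real.sin (Real.pi/8))
  else if (i = 0 ∧ j = 1 ∧ k = 1) ∨ (i = 1 ∧ j = 0 ∧ k = 1) ∨ (i = 1 ∧ j = 1 ∧ k = 0) then
    -(2*p*(x*y*z)*(Real.cos (Real.pi/8)*Real.sin (Real.pi/8)))
  else if i = 2 ∧ j = 2 ∧ k = 2 then
    p*((x*y*z)^2*Real.cos (Real.pi/8)^2 - Real.sin (Real.pi/8)^2)
      + (1-p)*(x^2*y^2)/2*(z^2-1)
  else 0

noncomputable def Umat (p x y z : ℝ) :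
    Matrix (Fin 2 × Fin 2 × Fin 2) (Fin 2 × Fin 2 × Fin 2) ℂ :=
  (Matrix.diagonal ![(x:ℂ),1] ⊗ₖ (Matrix.diagonal ![(y:ℂ),1] ⊗ₖ Matrix.diagonal ![(z:ℂ),1]))
    * rhoChi p *
  (Matrix.diagonal ![(x:ℂ),1] ⊗ₖ (Matrix.diagonal ![(y:ℂ),1] ⊗ₖ Matrix.diagonal ![(z:ℂ),1]))ᴴ

set_option maxHeartbeats 4000000 in
lemma traceU0 (p x y z : ℝ) (j k : Fin 3) :
    (Umat p x y z * (pauli 0 ⊗ₖ (pauli j ⊗ₖ pauli k))).trace = ((Vr p x y z 0 j k : ℝ) : ℂ) := by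
  fin_cases j <;> fin_cases k <;>
  · simp only [Umat, Vr, Matrix.diagonal_kronecker_diagonal, Matrix.diagonal_conjTranspose,
      Matrix.trace, Matrix.diag, Matrix.mul_apply, Matrix.diagonal_apply, Prod.mk.injEq,
      rhoChi, Matrix.add_apply, Matrix.smul_apply, Matrix.vecMulVec_apply, Pi.star_apply,
      Matrix.kroneckerMap_apply, E00, psiChi, pauli, Fintype.sum_prod_type, Fin.sum_univ_two,
      Matrix.one_apply, smul_eq_mul]
    norm_num [Fin.isValue, Matrix.cons_val_zero, Matrix.cons_val_one, Matrix.head_cons,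
      Complex.star_def, _root_.map_mul, _root_.map_one, Complex.conj_ofReal]
    push_cast
    ring_nf
    try norm_num [Complex.I_sq]
    try ring_nf

set_option maxHeartbeats 4000000 in
lemma traceU1 (p x y z : ℝ) (j k : Fin 3) :
    (Umat p x y z * (pauli 1 ⊗ₖ (pauli j ⊗ₖ pauli k))).trace = ((Vr p x y z 1 j k : ℝ) : ℂ) := by
  fin_cases j <;> fin_cases k <;>
  · simp only [Umat, Vr, Matrix.diagonal_kronecker_diagonal, Matrix.diagonal_conjTranspose,
      Matrix.trace, Matrix.diag, Matrix.mul_apply, Matrix.diagonal_apply, Prod.mk.injEq,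
      rhoChi, Matrix.add_apply, Matrix.smul_apply, Matrix.vecMulVec_apply, Pi.star_apply,
      Matrix.kroneckerMap_apply, E00, psiChi, pauli, Fintype.sum_prod_type, Fin.sum_univ_two,
      Matrix.one_apply, smul_eq_mul]
    norm_num [Fin.isValue, Matrix.cons_val_zero, Matrix.cons_val_one, Matrix.head_cons,
      Complex.star_def, _root_.map_mul, _root_.map_one, Complex.conj_ofReal]
    push_cast
    ring_nf
    try norm_num [Complex.I_sq]
    try ring_nf

set_option maxHeartbeats 4000000 in
lemma traceU2 (p x y z : ℝ) (j k : Fin 3) :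
    (Umat p x y z * (pauli 2 ⊗ₖ (pauli j ⊗ₖ pauli k))).trace = ((Vr p x y z 2 j k : ℝ) : ℂ) := by
  fin_cases j <;> fin_cases k <;>
  · simp only [Umat, Vr, Matrix.diagonal_kronecker_diagonal, Matrix.diagonal_conjTranspose,
      Matrix.trace, Matrix.diag, Matrix.mul_apply, Matrix.diagonal_apply, Prod.mk.injEq,
      rhoChi, Matrix.add_apply, Matrix.smul_apply, Matrix.vecMulVec_apply, Pi.star_apply,
      Matrix.kroneckerMap_apply, E00, psiChi, pauli, Fintype.sum_prod_type, Fin.sum_univ_two,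
      Matrix.one_apply, smul_eq_mul]
    norm_num [Fin.isValue, Matrix.cons_val_zero, Matrix.cons_val_one, Matrix.head_cons,
      Complex.star_def, _root_.map_mul, _root_.map_one, Complex.conj_ofReal]
    push_cast
    ring_nf
    try norm_num [Complex.I_sq]
    try ring_nf

lemma traceU (p x y z : ℝ) (i j k : Fin 3) :
    (Umat p x y z * (pauli i ⊗ₖ (pauli j ⊗ₖ pauli k))).trace = ((Vr p x y z i j k : ℝ) : ℂ) := by
  fin_cases i
  · exact traceU0 p x y z j k
  · exact traceU1 p x y z j k
  · exact traceU2 p x y z j k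

lemma obs_a : obs ![1,0,0] = pauli 0 := by
  simp [obs, Fin.sum_univ_three]

lemma obs_b : obs ![0,1,0] = pauli 1 := by
  simp [obs, Fin.sum_univ_three]

lemma obs_c : obs ![Real.sqrt 2/2, -(Real.sqrt 2/2), 0]
    = ((Real.sqrt 2/2 : ℝ) : ℂ) • (pauli 0 - pauli 1) := by
  ext i j
  fin_cases i <;> fin_cases j <;>
    simp [obs, Fin.sum_univ_three, pauli, Complex.real_smul] <;> ring

lemma obs_c' : obs ![Real.sqrt 2/2, Real.sqrt 2/2, 0]
    = ((Real.sqrt 2/2 : ℝ) : ℂ) • (pauli 0 + pauli 1) := by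
  ext i j
  fin_cases i <;> fin_cases j <;>
    simp [obs, Fin.sum_univ_three, pauli, Complex.real_smul] <;> ring

set_option maxHeartbeats 4000000 in
lemma svetTrace (p x y z : ℝ) :
    ((svetlichny ![1,0,0] ![0,1,0] ![1,0,0] ![0,1,0]
        ![Real.sqrt 2/2, -(Real.sqrt 2/2), 0] ![Real.sqrt 2/2, Real.sqrt 2/2, 0])
      * Umat p x y z).trace
    = ((8*(Real.cos (Real.pi/8)*Real.sin (Real.pi/8))*Real.sqrt 2*(p*(x*y*z)) : ℝ) : ℂ) := by
  rw [svetlichny, obs_a, obs_b, obs_c, obs_c']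
  simp only [Umat, Matrix.diagonal_kronecker_diagonal, Matrix.diagonal_conjTranspose,
    Matrix.trace, Matrix.diag, Matrix.mul_apply, Matrix.diagonal_apply, Prod.mk.injEq,
    rhoChi, Matrix.add_apply, Matrix.sub_apply, Matrix.smul_apply, Matrix.vecMulVec_apply,
    Pi.star_apply, Matrix.kroneckerMap_apply, E00, psiChi, pauli, Fintype.sum_prod_type,
    Fin.sum_univ_two, Matrix.one_apply, smul_eq_mul]
  norm_num [Fin.isValue, Matrix.cons_val_zero, Matrix.cons_val_one, Matrix.head_cons,
    Complex.star_def, _root_.map_mul, _root_.map_one, Complex.conj_ofReal]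
  push_cast
  ring_nf
  try norm_num [Complex.I_sq]
  try ring_nf

-- ########## scaffold part ##########

lemma sqrt2_sq : Real.sqrt 2 ^ 2 = 2 := Real.sq_sqrt (by norm_num)

lemma sqrt2_lb : 1.41421 < Real.sqrt 2 := by
  nlinarith [sqrt2_sq, Real.sqrt_nonneg 2]

lemma sqrt2_ub : Real.sqrt 2 < 1.41422 := by
  nlinarith [sqrt2_sq, Real.sqrt_nonneg 2]

lemma cos_sin_pi8 : Real.cos (Real.pi/8) * Real.sin (Real.pi/8) = Real.sqrt 2 / 4 := by
  have h := Real.sin_two_mul (Real.pi/8)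
  have h4 : 2 * (Real.pi/8) = Real.pi/4 := by ring
  rw [h4, Real.sin_pi_div_four] at h
  linarith

lemma cos_sq_pi8 : Real.cos (Real.pi/8) ^ 2 = (2 + Real.sqrt 2) / 4 := by
  rw [Real.cos_pi_div_eight, div_pow, Real.sq_sqrt (by positivity)]
  norm_num

lemma sin_sq_pi8 : Real.sin (Real.pi/8) ^ 2 = (2 - Real.sqrt 2) / 4 := by
  have h := Real.sin_sq_add_cos_sq (Real.pi/8)
  have := cos_sq_pi8
  nlinarith [sqrt2_sq]

lemma rhoChiFiltered_eq (p x y z : ℝ) :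
    rhoChiFiltered p x y z = ((Nchi p x y z : ℝ) : ℂ)⁻¹ • Umat p x y z := rfl

lemma corr_entry (p x y z : ℝ) (j : Fin 3) (ik : Fin 3 × Fin 3) :
    corrMat (rhoChiFiltered p x y z) j ik = (Nchi p x y z)⁻¹ * Vr p x y z ik.1 j ik.2 := by
  rw [corrMat, rhoChiFiltered_eq, Matrix.smul_mul, Matrix.trace_smul, traceU, smul_eq_mul,
    ← Complex.ofReal_inv, ← Complex.ofReal_mul]
  exact Complex.ofReal_re _

set_option maxHeartbeats 1000000 in
lemma MMT (p x y z : ℝ) :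
    corrMat (rhoChiFiltered p x y z) * (corrMat (rhoChiFiltered p x y z))ᵀ =
    Matrix.diagonal ![(p*x*y*z/Nchi p x y z)^2, (p*x*y*z/Nchi p x y z)^2,
      ((Nchi p x y z)⁻¹ * Vr p x y z 2 2 2)^2] := by
  have hcs2 : (Real.cos (Real.pi/8)*Real.sin (Real.pi/8))^2 = 1/8 := by
    rw [cos_sin_pi8, div_pow, sqrt2_sq]; norm_num
  ext j j'
  fin_cases j <;> fin_cases j' <;>
  · simp only [Matrix.mul_apply, Matrix.transpose_apply, Fintype.sum_prod_type,
      Fin.sum_univ_three, corr_entry, Vr]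
    simp [-Real.cos_pi_div_eight, -Real.sin_pi_div_eight, Matrix.diagonal, Matrix.of_apply]
    try first
      | ring1
      | linear_combination (8*(p*x*y*z*(Nchi p x y z)⁻¹)^2) * hcs2

lemma charpoly_root_iff (p x y z : ℝ) (t : ℝ) :
    ((corrMat (rhoChiFiltered p x y z) * (corrMat (rhoChiFiltered p x y z))ᵀ).charpoly).IsRoot t
    ↔ (t - (p*x*y*z/Nchi p x y z)^2) * ((t - (p*x*y*z/Nchi p x y z)^2) *
        (t - ((Nchi p x y z)⁻¹ * Vr p x y z 2 2 2)^2)) = 0 := by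
  rw [MMT, Matrix.charpoly_of_upperTriangular _ (Matrix.blockTriangular_diagonal _),
    Polynomial.IsRoot.def]
  simp [Fin.prod_univ_three, Matrix.diagonal_apply_eq]

lemma Vr222_abs_le (p x y z : ℝ) (hp0 : 0 ≤ p) (hp1 : p ≤ 1) :
    |Vr p x y z 2 2 2| ≤ Nchi p x y z := by
  have hV : Vr p x y z 2 2 2 = p*((x*y*z)^2*Real.cos (Real.pi/8)^2 - Real.sin (Real.pi/8)^2)
      + (1-p)*(x^2*y^2)/2*(z^2-1) := by
    simp [Vr]
  have h2m : (0:ℝ) ≤ 2 - Real.sqrt 2 := by nlinarith [sqrt2_ub]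
  have h2p : (0:ℝ) ≤ 2 + Real.sqrt 2 := by nlinarith [sqrt2_lb]
  rw [hV, cos_sq_pi8, sin_sq_pi8, abs_le, Nchi]
  constructor <;>
    nlinarith [mul_nonneg hp0 h2m, mul_nonneg (mul_nonneg hp0 h2m) (sq_nonneg (x*y*z)),
      mul_nonneg (sub_nonneg.2 hp1) (sq_nonneg (x*y)),
      mul_nonneg (mul_nonneg hp0 h2p) (sq_nonneg (x*y*z)),
      mul_nonneg (sub_nonneg.2 hp1) (sq_nonneg (x*y*z))]

set_option maxHeartbeats 2000000 in
theorem hidden_nonlocality_rhoChi (p : ℝ) (hp : 0.3697 < p) (hp1 : p ≤ 1) :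
    ∃ x y z : ℝ, 0 < x ∧ 0 < y ∧ 0 < z ∧
      p * x * y * z > Nchi p x y z ∧
      IsGreatest
        {s : ℝ | 0 ≤ s ∧
          (corrMat (rhoChiFiltered p x y z) *
            (corrMat (rhoChiFiltered p x y z))ᵀ).charpoly.IsRoot (s ^ 2)}
        (p * x * y * z / Nchi p x y z) ∧
      1 < p * x * y * z / Nchi p x y z ∧
      (∃ a a' b b' c c' : Fin 3 → ℝ,
        (∑ i : Fin 3, a i ^ 2 = 1) ∧ (∑ i : Fin 3, a' i ^ 2 = 1) ∧
        (∑ i : Fin 3, b i ^ 2 = 1) ∧ (∑ i : Fin 3, b' i ^ 2 = 1) ∧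
        (∑ i : Fin 3, c i ^ 2 = 1) ∧ (∑ i : Fin 3, c' i ^ 2 = 1) ∧
        4 < ‖(svetlichny a a' b b' c c' * rhoChiFiltered p x y z).trace‖) := by
  have hp0 : (0:ℝ) < p := by nlinarith [hp]
  have h2 := sqrt2_sq
  have hlb := sqrt2_lb
  have hub := sqrt2_ub
  have hs2pos : (0:ℝ) < Real.sqrt 2 := by linarith
  obtain ⟨D0, hD0def⟩ : ∃ D0 : ℝ, D0 = (1-p)/2 + 2500*(2 + Real.sqrt 2*p) := ⟨_, rfl⟩
  have hD0 : 0 < D0 := by nlinarith [mul_pos hs2pos hp0]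
  obtain ⟨x, hxdef⟩ : ∃ x : ℝ, x = 50*p/D0 := ⟨_, rfl⟩
  have hx0 : 0 < x := by rw [hxdef]; positivity
  have hxD : x * D0 = 50*p := by rw [hxdef]; field_simp
  have hNeq : Nchi p x 1 100 = (2-Real.sqrt 2)/4*p + 50*p*x := by
    rw [Nchi, hD0def] at *
    linear_combination x * hxD
  have hxlb : (2-Real.sqrt 2)/200 < x := by
    rw [hxdef, lt_div_iff₀ hD0]
    nlinarith [mul_pos hs2pos hp0]
  have key : Nchi p x 1 100 < p * x * 1 * 100 := by
    rw [hNeq]; nlinarith [mul_pos hp0 (sub_pos.mpr hxlb)]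
  have hN0 : 0 < Nchi p x 1 100 := by
    rw [hNeq]; nlinarith [mul_pos hp0 hx0]
  have hNne : Nchi p x 1 100 ≠ 0 := hN0.ne'
  have hq1 : 1 < p * x * 1 * 100 / Nchi p x 1 100 := (one_lt_div hN0).mpr key
  have hq0 : 0 < p * x * 1 * 100 / Nchi p x 1 100 := lt_trans one_pos hq1
  refine ⟨x, 1, 100, hx0, one_pos, by norm_num, key, ?_, hq1, ?_⟩
  · constructor
    · refine ⟨hq0.le, ?_⟩
      rw [charpoly_root_iff]
      rw [sub_self, zero_mul]
    · rintro s ⟨hs0, hroot⟩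
      rw [charpoly_root_iff] at hroot
      rcases mul_eq_zero.mp hroot with h1 | h1
      · nlinarith [sub_eq_zero.mp h1]
      · rcases mul_eq_zero.mp h1 with h1' | h1'
        · nlinarith [sub_eq_zero.mp h1']
        · have habs := Vr222_abs_le p x 1 100 hp0.le hp1
          have hV2 : (Vr p x 1 100 2 2 2)^2 ≤ (Nchi p x 1 100)^2 := by
            nlinarith [sq_abs (Vr p x 1 100 2 2 2), abs_nonneg (Vr p x 1 100 2 2 2)]
          have hinv : (Nchi p x 1 100)⁻¹ * Nchi p x 1 100 = 1 := inv_mul_cancel₀ hNne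
          have hdd : ((Nchi p x 1 100)⁻¹ * Vr p x 1 100 2 2 2)^2 ≤ 1 := by
            nlinarith [sq_nonneg ((Nchi p x 1 100)⁻¹), hV2, hinv]
          have hs2' := sub_eq_zero.mp h1'
          nlinarith [hq1, hq0]
  · refine ⟨![1,0,0], ![0,1,0], ![1,0,0], ![0,1,0],
      ![Real.sqrt 2/2, -(Real.sqrt 2/2), 0], ![Real.sqrt 2/2, Real.sqrt 2/2, 0],
      by norm_num [Fin.sum_univ_three, Matrix.cons_val_two, Matrix.tail_cons, Matrix.head_cons], by norm_num [Fin.sum_univ_three, Matrix.cons_val_two, Matrix.tail_cons, Matrix.head_cons],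
      by norm_num [Fin.sum_univ_three, Matrix.cons_val_two, Matrix.tail_cons, Matrix.head_cons], by norm_num [Fin.sum_univ_three, Matrix.cons_val_two, Matrix.tail_cons, Matrix.head_cons],
      ?_, ?_, ?_⟩
    · rw [Fin.sum_univ_three]
      norm_num [Matrix.cons_val_two, Matrix.tail_cons, Matrix.head_cons]
      linear_combination h2/2
    · rw [Fin.sum_univ_three]
      norm_num [Matrix.cons_val_two, Matrix.tail_cons, Matrix.head_cons]
      linear_combination h2/2
    · rw [rhoChiFiltered_eq, Matrix.mul_smul, Matrix.trace_smul, svetTrace, smul_eq_mul,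
        ← Complex.ofReal_inv, ← Complex.ofReal_mul, Complex.norm_real, Real.norm_eq_abs]
      have hval : (Nchi p x 1 100)⁻¹ *
          (8*(Real.cos (Real.pi/8)*Real.sin (Real.pi/8))*Real.sqrt 2*(p*(x*1*100)))
          = (Nchi p x 1 100)⁻¹ * (400*(p*x)) := by
        rw [cos_sin_pi8]; linear_combination ((Nchi p x 1 100)⁻¹*200*p*x) * h2
      rw [hval, abs_of_pos (by positivity), inv_mul_eq_div, lt_div_iff₀ hN0]
      nlinarith [key]
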